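/- For any two locally orthogonal events e = (ā|x̄) and e' = (ā'|x̄') of an almost quantum representation, the associated vectors |e⟩ = ∏_k E_k^{a_k,x_k}|φ⟩ and |e'⟩ = ∏_k E_k^{a'_k,x'_k}|φ⟩ satisfy ⟨e|e'⟩ = 0. -/

import Mathlib

/-- Ordered product of operators applied to a vector. -/
def seqApply {H : Type*} [AddCommMonoid H] [Module ℂ H] {n : ℕ}
    (T : Fin n → (H →ₗ[ℂ] H)) (v : H) : H :=
  (List.ofFn T).foldr (fun f w => f w) v

lemma seqApply_succ {H : Type*} [AddCommMonoid H] [Module ℂ H] {m : ℕ}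
    (T : Fin (m + 1) → (H →ₗ[ℂ] H)) (v : H) :
    seqApply T v = T 0 (seqApply (fun i => T i.succ) v) := by
  simp [seqApply, List.ofFn_succ]

/-- for any two locally orthogonal events `e = (ā|x̄)`, `e' = (ā'|x̄')`
(i.e. some party `k` has `x_k = x'_k` but `a_k ≠ a'_k`) of an almost quantum
representation, the vectors `|e⟩ = ∏ₖ E_k^{a_k,x_k}|φ⟩` and `|e'⟩ = ∏ₖ E_k^{a'_k,x'_k}|φ⟩`
are orthogonal. -/
theorem locally_orthogonal_events_vectors_orthogonal
    {n : ℕ} {A X : Type*}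
    {H : Type*} [NormedAddCommGroup H] [InnerProductSpace ℂ H]
    (φ : H) (E : Fin n → A → X → (H →ₗ[ℂ] H))
    (hidem : ∀ k a x, E k a x ∘ₗ E k a x = E k a x)
    (horth : ∀ k a a' x, a ≠ a' → E k a x ∘ₗ E k a' x = 0)
    (hsa : ∀ k a x (v w : H), (inner ℂ ((E k a x) v) w : ℂ) = inner ℂ v ((E k a x) w))
    (hperm : ∀ (a : Fin n → A) (x : Fin n → X) (π : Equiv.Perm (Fin n)),
      seqApply (fun i => E (π i) (a (π i)) (x (π i))) φ =
        seqApply (fun i => E i (a i) (x i)) φ)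
    (a a' : Fin n → A) (x x' : Fin n → X)
    (hLO : ∃ k, x k = x' k ∧ a k ≠ a' k) :
    (inner ℂ (seqApply (fun i => E i (a i) (x i)) φ)
      (seqApply (fun i => E i (a' i) (x' i)) φ) : ℂ) = 0 := by
  obtain ⟨k, hx, ha⟩ := hLO
  cases n with
  | zero => exact k.elim0
  | succ m =>
    set π := Equiv.swap (0 : Fin (m + 1)) k with hπ
    have hπ0 : π 0 = k := Equiv.swap_apply_left 0 k
    rw [← hperm a x π, ← hperm a' x' π,
      seqApply_succ (fun i => E (π i) (a (π i)) (x (π i))) φ,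
      seqApply_succ (fun i => E (π i) (a' (π i)) (x' (π i))) φ]
    simp only [hπ0]
    rw [hsa]
    have h0 : E k (a k) (x k)
        ((E k (a' k) (x' k)) (seqApply (fun i => E (π i.succ) (a' (π i.succ)) (x' (π i.succ))) φ)) = 0 := by
      have := horth k (a k) (a' k) (x k) ha
      rw [hx] at this ⊢
      calc E k (a k) (x' k) ((E k (a' k) (x' k)) _)
          = (E k (a k) (x' k) ∘ₗ E k (a' k) (x' k)) _ := rfl
        _ = 0 := by rw [this]; rfl
    rw [h0, inner_zero_right]
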